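/- For all sites r, s : Fin L with r > s, the anyonic oscillators satisfy the braiding relations: a(r)a(s) + q⁻¹ a(s)a(r) = 0, a†(r)a†(s) + q⁻¹ a†(s)a†(r) = 0, a†(r)a(s) + q a(s)a†(r) = 0, and a(r)a†(s) + q a†(s)a(r) = 0 (as linear maps on V). -/

import Mathlib

/-!
Anyonic oscillators on a one-dimensional lattice `Fin L`, built from fermionic
oscillators on the fermionic Fock space `(Fin L → Bool) →₀ ℂ` and disorder factors.
-/

noncomputable section

/-- The fermionic Fock space on a lattice of `L` sites. -/
abbrev FSpace (L : ℕ) : Type := (Fin L → Bool) →₀ ℂ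

/-- The Jordan–Wigner sign `(−1)^{#{t < r : f t = true}}`. -/
def fSign {L : ℕ} (f : Fin L → Bool) (r : Fin L) : ℂ :=
  (-1 : ℂ) ^ (Finset.univ.filter fun t => t < r ∧ f t = true).card

/-- The fermionic annihilation operator `c(r)`. -/
def cAnn {L : ℕ} (r : Fin L) : Module.End ℂ (FSpace L) :=
  Finsupp.lift (FSpace L) ℂ (Fin L → Bool) fun f =>
    if f r = true then fSign f r • Finsupp.single (Function.update f r false) (1 : ℂ) else 0

/-- The fermionic creation operator `c†(r)`. -/
def cCre {L : ℕ} (r : Fin L) : Module.End ℂ (FSpace L) :=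
  Finsupp.lift (FSpace L) ℂ (Fin L → Bool) fun f =>
    if f r = false then fSign f r • Finsupp.single (Function.update f r true) (1 : ℂ) else 0

/-- The exponent `Σ_t ε(t−r) f(t)`, where `ε` is the sign function. -/
def fExp {L : ℕ} (r : Fin L) (f : Fin L → Bool) : ℤ :=
  ∑ t : Fin L, Int.sign (((t : ℕ) : ℤ) - ((r : ℕ) : ℤ)) * (if f t = true then 1 else 0)

/-- The disorder operator `K⁺(r) : |f⟩ ↦ p^{Σ_t ε(t−r) f(t)} |f⟩`. -/
def Kplus {L : ℕ} (p : ℂ) (r : Fin L) : Module.End ℂ (FSpace L) :=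
  Finsupp.lift (FSpace L) ℂ (Fin L → Bool) fun f =>
    (p ^ fExp r f) • Finsupp.single f (1 : ℂ)

/-- The disorder operator `K⁻(r) : |f⟩ ↦ p^{−Σ_t ε(t−r) f(t)} |f⟩`. -/
def Kminus {L : ℕ} (p : ℂ) (r : Fin L) : Module.End ℂ (FSpace L) :=
  Finsupp.lift (FSpace L) ℂ (Fin L → Bool) fun f =>
    (p ^ (-fExp r f)) • Finsupp.single f (1 : ℂ)

/-- The anyonic oscillator `a(r) = K⁻(r) ∘ c(r)`. -/
def aAnn {L : ℕ} (p : ℂ) (r : Fin L) : Module.End ℂ (FSpace L) := Kminus p r * cAnn r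

/-- The anyonic oscillator `a†(r) = K⁺(r) ∘ c†(r)`. -/
def aCre {L : ℕ} (p : ℂ) (r : Fin L) : Module.End ℂ (FSpace L) := Kplus p r * cCre r

set_option linter.unreachableTactic false
set_option linter.unusedTactic false
section Helpers
variable {L : ℕ}

lemma lift_single (g : (Fin L → Bool) → FSpace L) (f : Fin L → Bool) (b : ℂ) :
    Finsupp.lift (FSpace L) ℂ (Fin L → Bool) g (Finsupp.single f b) = b • g f := by
  simp [Finsupp.lift_apply, Finsupp.sum_single_index]

lemma fSign_prod (f : Fin L → Bool) (r : Fin L) :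
    fSign f r = ∏ t ∈ Finset.univ.filter (· < r), (if f t = true then (-1:ℂ) else 1) := by
  rw [fSign, Finset.prod_ite, Finset.prod_const, Finset.prod_const, one_pow, mul_one,
    Finset.filter_filter]

lemma fSign_update_of_lt (f : Fin L → Bool) {s r : Fin L} (h : s < r) (b : Bool) :
    fSign (Function.update f s b) r
      = (if b = true then (-1:ℂ) else 1) * (if f s = true then (-1:ℂ) else 1) * fSign f r := by
  have hs : s ∈ Finset.univ.filter (· < r) := by simp [h]
  rw [fSign_prod, fSign_prod, ← Finset.mul_prod_erase _ _ hs, ← Finset.mul_prod_erase _ _ hs,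
    Function.update_self]
  have he : ∏ t ∈ (Finset.univ.filter (· < r)).erase s,
      (if Function.update f s b t = true then (-1:ℂ) else 1)
      = ∏ t ∈ (Finset.univ.filter (· < r)).erase s, (if f t = true then (-1:ℂ) else 1) := by
    refine Finset.prod_congr rfl fun t ht => ?_
    rw [Function.update_of_ne (Finset.ne_of_mem_erase ht)]
  rw [he]
  rcases b <;> rcases hfs : f s <;> simp

lemma fSign_update_of_not_lt (f : Fin L → Bool) {s r : Fin L} (h : ¬ r < s) (b : Bool) :
    fSign (Function.update f r b) s = fSign f s := by
  rw [fSign_prod, fSign_prod]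
  refine Finset.prod_congr rfl fun t ht => ?_
  have : t ≠ r := by
    rintro rfl
    simp only [Finset.mem_filter] at ht
    exact h ht.2
  rw [Function.update_of_ne this]

lemma fExp_update (r s : Fin L) (f : Fin L → Bool) (b : Bool) :
    fExp r (Function.update f s b) = fExp r f
      + Int.sign (((s:ℕ):ℤ) - ((r:ℕ):ℤ)) * ((if b = true then 1 else 0) - (if f s = true then 1 else 0)) := by
  rw [fExp, fExp, ← Finset.add_sum_erase _ _ (Finset.mem_univ s),
      ← Finset.add_sum_erase _ _ (Finset.mem_univ s), Function.update_self]
  have he : ∑ t ∈ Finset.univ.erase s,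
        Int.sign (((t:ℕ):ℤ) - ((r:ℕ):ℤ)) * (if Function.update f s b t = true then 1 else 0)
      = ∑ t ∈ Finset.univ.erase s,
        Int.sign (((t:ℕ):ℤ) - ((r:ℕ):ℤ)) * (if f t = true then 1 else 0) := by
    refine Finset.sum_congr rfl fun t ht => ?_
    rw [Function.update_of_ne (Finset.ne_of_mem_erase ht)]
  rw [he]; ring

lemma sign_neg_of_lt {s r : Fin L} (h : s < r) :
    Int.sign (((s:ℕ):ℤ) - ((r:ℕ):ℤ)) = -1 := by
  have : ((s:ℕ):ℤ) - ((r:ℕ):ℤ) < 0 := by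
    have := (Fin.lt_iff_val_lt_val.mp h); omega
  exact Int.sign_eq_neg_one_of_neg this

lemma sign_pos_of_lt {s r : Fin L} (h : s < r) :
    Int.sign (((r:ℕ):ℤ) - ((s:ℕ):ℤ)) = 1 := by
  have : (0:ℤ) < ((r:ℕ):ℤ) - ((s:ℕ):ℤ) := by
    have := (Fin.lt_iff_val_lt_val.mp h); omega
  exact Int.sign_eq_one_of_pos this

lemma fExp_update_self (r : Fin L) (f : Fin L → Bool) (b : Bool) :
    fExp r (Function.update f r b) = fExp r f := by
  rw [fExp_update]; simp

lemma aAnn_single (p : ℂ) (r : Fin L) (f : Fin L → Bool) (b : ℂ) :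
    aAnn p r (Finsupp.single f b) =
      if f r = true then (b * fSign f r * p ^ (-(fExp r f))) •
        Finsupp.single (Function.update f r false) (1:ℂ) else 0 := by
  rw [aAnn, Module.End.mul_apply, cAnn, lift_single]
  by_cases h : f r = true
  · rw [if_pos h, if_pos h, map_smul, map_smul, Kminus, lift_single, one_smul,
      fExp_update_self, smul_smul, smul_smul]
  · rw [if_neg h, if_neg h, smul_zero, map_zero]

lemma aCre_single (p : ℂ) (r : Fin L) (f : Fin L → Bool) (b : ℂ) :
    aCre p r (Finsupp.single f b) =
      if f r = false then (b * fSign f r * p ^ (fExp r f)) •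
        Finsupp.single (Function.update f r true) (1:ℂ) else 0 := by
  rw [aCre, Module.End.mul_apply, cCre, lift_single]
  by_cases h : f r = false
  · rw [if_pos h, if_pos h, map_smul, map_smul, Kplus, lift_single, one_smul,
      fExp_update_self, smul_smul, smul_smul]
  · rw [if_neg h, if_neg h, smul_zero, map_zero]

end Helpers

/-- braiding relations between anyonic oscillators at sites `r > s`. -/
theorem anyon_braiding (L : ℕ) (hL : 1 ≤ L) (p : ℂ) (hp : p ≠ 0)
    (q : ℂ) (hq : q = p ^ 2) (r s : Fin L) (hrs : s < r) :
    aAnn p r * aAnn p s + q⁻¹ • (aAnn p s * aAnn p r) = 0 ∧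
    aCre p r * aCre p s + q⁻¹ • (aCre p s * aCre p r) = 0 ∧
    aCre p r * aAnn p s + q • (aAnn p s * aCre p r) = 0 ∧
    aAnn p r * aCre p s + q • (aCre p s * aAnn p r) = 0 := by
  subst hq
  have hrs' : r ≠ s := hrs.ne'
  have hsr' : s ≠ r := hrs.ne
  refine ⟨?_, ?_, ?_, ?_⟩
  · -- a(r)a(s) + q⁻¹ a(s)a(r) = 0
    refine Finsupp.lhom_ext fun f b => ?_
    simp only [LinearMap.add_apply, Module.End.mul_apply, LinearMap.smul_apply,
      LinearMap.zero_apply]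
    rw [aAnn_single, aAnn_single]
    by_cases hfs : f s = true
    · by_cases hfr : f r = true
      · rw [if_pos hfs, if_pos hfr, map_smul, map_smul, aAnn_single, aAnn_single,
          if_pos (show Function.update f s false r = true by
            rw [Function.update_of_ne hrs']; exact hfr),
          if_pos (show Function.update f r false s = true by
            rw [Function.update_of_ne hsr']; exact hfs),
          fSign_update_of_lt f hrs false, fSign_update_of_not_lt f (lt_asymm hrs) false,
          show fExp r (Function.update f s false) = fExp r f + 1 by
            rw [fExp_update, sign_neg_of_lt hrs, hfs]; simp <;> ring,
          show fExp s (Function.update f r false) = fExp s f - 1 by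
            rw [fExp_update, sign_pos_of_lt hrs, hfr]; simp <;> ring,
          show Function.update (Function.update f r false) s false
              = Function.update (Function.update f s false) r false from
            Function.update_comm hrs' false false f,
          smul_smul, smul_smul, smul_smul, ← add_smul]
        refine smul_eq_zero_of_left ?_ _
        rw [show -(fExp r f + 1) = -fExp r f + (-1) by ring,
          show -(fExp s f - 1) = -fExp s f + 1 by ring,
          zpow_add₀ hp, zpow_add₀ hp, zpow_neg_one, zpow_one]
        simp only [hfs, if_true]
        field_simp
        simp only [Bool.false_eq_true, if_false]
        ring
      · rw [if_pos hfs, if_neg hfr, map_zero, smul_zero, add_zero, map_smul, aAnn_single,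
          if_neg (show ¬ Function.update f s false r = true by
            rw [Function.update_of_ne hrs']; exact hfr), smul_zero]
    · rw [if_neg hfs, map_zero, zero_add]
      by_cases hfr : f r = true
      · rw [if_pos hfr, map_smul, aAnn_single,
          if_neg (show ¬ Function.update f r false s = true by
            rw [Function.update_of_ne hsr']; exact hfs), smul_zero, smul_zero]
      · rw [if_neg hfr, map_zero, smul_zero]
  · -- a†(r)a†(s) + q⁻¹ a†(s)a†(r) = 0
    refine Finsupp.lhom_ext fun f b => ?_
    simp only [LinearMap.add_apply, Module.End.mul_apply, LinearMap.smul_apply,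
      LinearMap.zero_apply]
    rw [aCre_single, aCre_single]
    by_cases hfs : f s = false
    · by_cases hfr : f r = false
      · rw [if_pos hfs, if_pos hfr, map_smul, map_smul, aCre_single, aCre_single,
          if_pos (show Function.update f s true r = false by
            rw [Function.update_of_ne hrs']; exact hfr),
          if_pos (show Function.update f r true s = false by
            rw [Function.update_of_ne hsr']; exact hfs),
          fSign_update_of_lt f hrs true, fSign_update_of_not_lt f (lt_asymm hrs) true,
          show fExp r (Function.update f s true) = fExp r f - 1 by
            rw [fExp_update, sign_neg_of_lt hrs, hfs]; simp <;> ring,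
          show fExp s (Function.update f r true) = fExp s f + 1 by
            rw [fExp_update, sign_pos_of_lt hrs, hfr]; simp <;> ring,
          show Function.update (Function.update f r true) s true
              = Function.update (Function.update f s true) r true from
            Function.update_comm hrs' true true f,
          smul_smul, smul_smul, smul_smul, ← add_smul]
        refine smul_eq_zero_of_left ?_ _
        rw [show fExp r f - 1 = fExp r f + (-1) by ring,
          show fExp s f + 1 = fExp s f + 1 by ring,
          zpow_add₀ hp, zpow_add₀ hp, zpow_neg_one, zpow_one]
        simp only [hfs, if_true]
        field_simp
        simp only [Bool.false_eq_true, if_false]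
        ring
      · rw [if_pos hfs, if_neg hfr, map_zero, smul_zero, add_zero, map_smul, aCre_single,
          if_neg (show ¬ Function.update f s true r = false by
            rw [Function.update_of_ne hrs']; exact hfr), smul_zero]
    · rw [if_neg hfs, map_zero, zero_add]
      by_cases hfr : f r = false
      · rw [if_pos hfr, map_smul, aCre_single,
          if_neg (show ¬ Function.update f r true s = false by
            rw [Function.update_of_ne hsr']; exact hfs), smul_zero, smul_zero]
      · rw [if_neg hfr, map_zero, smul_zero]
  · -- a†(r)a(s) + q a(s)a†(r) = 0
    refine Finsupp.lhom_ext fun f b => ?_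
    simp only [LinearMap.add_apply, Module.End.mul_apply, LinearMap.smul_apply,
      LinearMap.zero_apply]
    rw [aAnn_single, aCre_single]
    by_cases hfs : f s = true
    · by_cases hfr : f r = false
      · rw [if_pos hfs, if_pos hfr, map_smul, map_smul, aCre_single, aAnn_single,
          if_pos (show Function.update f s false r = false by
            rw [Function.update_of_ne hrs']; exact hfr),
          if_pos (show Function.update f r true s = true by
            rw [Function.update_of_ne hsr']; exact hfs),
          fSign_update_of_lt f hrs false, fSign_update_of_not_lt f (lt_asymm hrs) true,
          show fExp r (Function.update f s false) = fExp r f + 1 by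
            rw [fExp_update, sign_neg_of_lt hrs, hfs]; simp <;> ring,
          show fExp s (Function.update f r true) = fExp s f + 1 by
            rw [fExp_update, sign_pos_of_lt hrs, hfr]; simp <;> ring,
          show Function.update (Function.update f r true) s false
              = Function.update (Function.update f s false) r true from
            Function.update_comm hrs' true false f,
          smul_smul, smul_smul, smul_smul, ← add_smul]
        refine smul_eq_zero_of_left ?_ _
        rw [show fExp r f + 1 = fExp r f + 1 by ring,
          show -(fExp s f + 1) = -fExp s f + (-1) by ring,
          zpow_add₀ hp, zpow_add₀ hp, zpow_neg_one, zpow_one]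
        simp only [hfs, if_true]
        field_simp
        simp only [Bool.false_eq_true, if_false]
        ring
      · rw [if_pos hfs, if_neg hfr, map_zero, smul_zero, add_zero, map_smul, aCre_single,
          if_neg (show ¬ Function.update f s false r = false by
            rw [Function.update_of_ne hrs']; exact hfr), smul_zero]
    · rw [if_neg hfs, map_zero, zero_add]
      by_cases hfr : f r = false
      · rw [if_pos hfr, map_smul, aAnn_single,
          if_neg (show ¬ Function.update f r true s = true by
            rw [Function.update_of_ne hsr']; exact hfs), smul_zero, smul_zero]
      · rw [if_neg hfr, map_zero, smul_zero]
  · -- a(r)a†(s) + q a†(s)a(r) = 0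
    refine Finsupp.lhom_ext fun f b => ?_
    simp only [LinearMap.add_apply, Module.End.mul_apply, LinearMap.smul_apply,
      LinearMap.zero_apply]
    rw [aCre_single, aAnn_single]
    by_cases hfs : f s = false
    · by_cases hfr : f r = true
      · rw [if_pos hfs, if_pos hfr, map_smul, map_smul, aAnn_single, aCre_single,
          if_pos (show Function.update f s true r = true by
            rw [Function.update_of_ne hrs']; exact hfr),
          if_pos (show Function.update f r false s = false by
            rw [Function.update_of_ne hsr']; exact hfs),
          fSign_update_of_lt f hrs true, fSign_update_of_not_lt f (lt_asymm hrs) false,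
          show fExp r (Function.update f s true) = fExp r f - 1 by
            rw [fExp_update, sign_neg_of_lt hrs, hfs]; simp <;> ring,
          show fExp s (Function.update f r false) = fExp s f - 1 by
            rw [fExp_update, sign_pos_of_lt hrs, hfr]; simp <;> ring,
          show Function.update (Function.update f r false) s true
              = Function.update (Function.update f s true) r false from
            Function.update_comm hrs' false true f,
          smul_smul, smul_smul, smul_smul, ← add_smul]
        refine smul_eq_zero_of_left ?_ _
        rw [show -(fExp r f - 1) = -fExp r f + 1 by ring,
          show fExp s f - 1 = fExp s f + (-1) by ring,
          zpow_add₀ hp, zpow_add₀ hp, zpow_neg_one, zpow_one]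
        simp only [hfs, if_true]
        field_simp
        simp only [Bool.false_eq_true, if_false]
        ring
      · rw [if_pos hfs, if_neg hfr, map_zero, smul_zero, add_zero, map_smul, aAnn_single,
          if_neg (show ¬ Function.update f s true r = true by
            rw [Function.update_of_ne hrs']; exact hfr), smul_zero]
    · rw [if_neg hfs, map_zero, zero_add]
      by_cases hfr : f r = true
      · rw [if_pos hfr, map_smul, aCre_single,
          if_neg (show ¬ Function.update f r false s = false by
            rw [Function.update_of_ne hsr']; exact hfs), smul_zero, smul_zero]
      · rw [if_neg hfr, map_zero, smul_zero]

end
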